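/- Let Ω ⊆ ℝ² be a nonempty bounded open connected set, let a : Ω → ℝ be continuous with a(x) > 0 for all x ∈ Ω, and let c : Ω → ℝ² be continuous. Suppose w : ℝ² → ℝ is continuous on the closure of Ω, twice continuously differentiable on Ω, w = 0 on the frontier of Ω, and a(x)·Δw(x) + ⟨c(x), ∇w(x)⟩ = 0 for all x ∈ Ω. Then w = 0 on the closure of Ω. -/

import Mathlib

open Real Set

/-- Second derivative test: at a local max where the function is differentiable nearby and
the derivative is differentiable, the second derivative is nonpositive. -/
lemma second_deriv_nonpos_of_isLocalMax {f : ℝ → ℝ} {x : ℝ}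
    (hmax : IsLocalMax f x) (hf : ∀ᶠ y in nhds x, DifferentiableAt ℝ f y)
    (hf' : DifferentiableAt ℝ (deriv f) x) : deriv (deriv f) x ≤ 0 := by
  by_contra hcon
  push_neg at hcon
  have h0 : deriv f x = 0 := hmax.deriv_eq_zero
  have hd : HasDerivAt (deriv f) (deriv (deriv f) x) x := hf'.hasDerivAt
  have hslope := hasDerivAt_iff_tendsto_slope.1 hd
  have hev : ∀ᶠ y in nhdsWithin x {x}ᶜ, 0 < slope (deriv f) x y :=
    hslope.eventually (lt_mem_nhds hcon)
  have hev' : ∀ᶠ y in nhdsWithin x (Ioi x), 0 < deriv f y := by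
    have hmono : nhdsWithin x (Ioi x) ≤ nhdsWithin x {x}ᶜ :=
      nhdsWithin_mono x (fun y hy => ne_of_gt hy)
    filter_upwards [hmono hev, self_mem_nhdsWithin] with y hy hy'
    have hxy : 0 < y - x := sub_pos.2 hy'
    rw [slope_def_field, h0, sub_zero] at hy
    -- hy : 0 < deriv f y / (y - x)
    have := mul_pos hy hxy
    rwa [div_mul_cancel₀ _ (ne_of_gt hxy)] at this
  have h1 : ∀ᶠ y in nhds x, DifferentiableAt ℝ f y ∧ f y ≤ f x := hf.and hmax
  rw [Metric.eventually_nhds_iff] at h1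
  obtain ⟨ε₁, hε₁, H1⟩ := h1
  rw [eventually_nhdsWithin_iff, Metric.eventually_nhds_iff] at hev'
  obtain ⟨ε₂, hε₂, H2⟩ := hev'
  set b := x + min ε₁ ε₂ / 2 with hb
  have hmin : 0 < min ε₁ ε₂ := lt_min hε₁ hε₂
  have hxb : x < b := by simp only [hb]; linarith
  have hdist : ∀ y ∈ Icc x b, dist y x < min ε₁ ε₂ := by
    intro y hy
    rw [Real.dist_eq, abs_of_nonneg (by linarith [hy.1])]
    have := hy.2
    simp only [hb] at this ⊢
    linarith
  have hmono : StrictMonoOn f (Icc x b) := by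
    apply strictMonoOn_of_deriv_pos (convex_Icc x b)
    · intro y hy
      exact ((H1 (lt_of_lt_of_le (hdist y hy) (min_le_left _ _))).1).continuousAt.continuousWithinAt
    · intro y hy
      rw [interior_Icc] at hy
      exact H2 (lt_of_lt_of_le (hdist y ⟨hy.1.le, hy.2.le⟩) (min_le_right _ _)) hy.1
  have hlt : f x < f b := hmono (left_mem_Icc.2 hxb.le) (right_mem_Icc.2 hxb.le) hxb
  have hle : f b ≤ f x :=
    (H1 (lt_of_lt_of_le (hdist b (right_mem_Icc.2 hxb.le)) (min_le_left _ _))).2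
  linarith

/-- First coordinate partial derivative of a function on `ℝ²`. -/
noncomputable def pdX (f : ℝ × ℝ → ℝ) (p : ℝ × ℝ) : ℝ := deriv (fun t => f (t, p.2)) p.1

/-- Second coordinate partial derivative of a function on `ℝ²`. -/
noncomputable def pdY (f : ℝ × ℝ → ℝ) (p : ℝ × ℝ) : ℝ := deriv (fun t => f (p.1, t)) p.2

/-- Euclidean Laplacian on `ℝ²` via coordinate partial derivatives. -/
noncomputable def lap (f : ℝ × ℝ → ℝ) (p : ℝ × ℝ) : ℝ := pdX (pdX f) p + pdY (pdY f) p

/-- Half of the maximum principle: the solution is nonpositive on the closure. -/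
lemma max_principle_half (Ω : Set (ℝ × ℝ)) (hopen : IsOpen Ω) (hne : Ω.Nonempty)
    (hbd : Bornology.IsBounded Ω)
    (a : ℝ × ℝ → ℝ) (ha_cont : ContinuousOn a Ω) (ha_pos : ∀ p ∈ Ω, 0 < a p)
    (c : ℝ × ℝ → ℝ × ℝ) (hc_cont : ContinuousOn c Ω)
    (w : ℝ × ℝ → ℝ)
    (hw_cont : ContinuousOn w (closure Ω))
    (hw_reg : ContDiffOn ℝ 2 w Ω)
    (hw_bdry : ∀ p ∈ frontier Ω, w p = 0)
    (heq : ∀ p ∈ Ω, a p * lap w p + ((c p).1 * pdX w p + (c p).2 * pdY w p) = 0) :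
    ∀ p ∈ closure Ω, w p ≤ 0 := by
  by_contra hcon
  push_neg at hcon
  obtain ⟨p₁, hp₁, hwp₁⟩ := hcon
  have hclos_cpt : IsCompact (closure Ω) :=
    Metric.isCompact_of_isClosed_isBounded isClosed_closure hbd.closure
  obtain ⟨p₀, hp₀c, hp₀max⟩ := hclos_cpt.exists_isMaxOn ⟨p₁, hp₁⟩ hw_cont
  set M := w p₀ with hMdef
  have hM : 0 < M := lt_of_lt_of_le hwp₁ (hp₀max hp₁)
  -- the compact set where w ≥ M/2
  set K := closure Ω ∩ w ⁻¹' (Ici (M / 2)) with hKdef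
  have hKclosed : IsClosed K :=
    hw_cont.preimage_isClosed_of_isClosed isClosed_closure isClosed_Ici
  have hKcpt : IsCompact K := hclos_cpt.of_isClosed_subset hKclosed inter_subset_left
  have hKΩ : K ⊆ Ω := by
    intro x hx
    by_contra hxΩ
    have hfr : x ∈ frontier Ω := by
      rw [frontier, hopen.interior_eq]
      exact ⟨hx.1, hxΩ⟩
    have := hw_bdry x hfr
    have hxK : M / 2 ≤ w x := hx.2
    rw [this] at hxK
    linarith
  have hp₀K : p₀ ∈ K := ⟨hp₀c, by simp only [mem_preimage, mem_Ici]; linarith⟩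
  have hKne : K.Nonempty := ⟨p₀, hp₀K⟩
  -- lower bound on a, upper bound on |c₁|, upper bound on exp factor
  obtain ⟨z, hzK, hzmin⟩ := hKcpt.exists_isMinOn hKne (ha_cont.mono hKΩ)
  set a₀ := a z with ha₀def
  have ha₀ : 0 < a₀ := ha_pos z (hKΩ hzK)
  have hc1cont : ContinuousOn (fun x => |(c x).1|) K :=
    (continuous_abs.comp_continuousOn (continuous_fst.comp_continuousOn (hc_cont.mono hKΩ)))
  obtain ⟨y₀, hy₀K, hy₀max⟩ := hKcpt.exists_isMaxOn hKne hc1cont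
  set C := |(c y₀).1| with hCdef
  have hC0 : 0 ≤ C := abs_nonneg _
  set α := C / a₀ + 1 with hαdef
  have hα : 0 < α := by positivity
  have hαkey : ∀ x ∈ K, C < a x * α := by
    intro x hx
    have h1 : a₀ ≤ a x := hzmin hx
    have h2 : a₀ * α = C + a₀ := by
      rw [hαdef, mul_add, mul_one, mul_div_assoc', mul_div_right_comm, div_self ha₀.ne', one_mul]
    nlinarith [ha_pos x (hKΩ hx)]
  have hexp_cont : Continuous (fun x : ℝ × ℝ => Real.exp (α * x.1)) := by fun_prop
  obtain ⟨e₀, he₀K, he₀max⟩ := hKcpt.exists_isMaxOn hKne hexp_cont.continuousOn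
  set E := Real.exp (α * e₀.1) with hEdef
  have hE : 0 < E := Real.exp_pos _
  set ε := M / (4 * E) with hεdef
  have hε : 0 < ε := by positivity
  set v := fun x : ℝ × ℝ => w x + ε * Real.exp (α * x.1) with hvdef
  have hvcont : ContinuousOn v K :=
    (hw_cont.mono inter_subset_left).add (continuous_const.mul hexp_cont).continuousOn
  obtain ⟨q, hqK, hqmax⟩ := hKcpt.exists_isMaxOn hKne hvcont
  by_cases hq : M / 2 < w q
  · -- interior case: derivative test contradiction
    have hqΩ : q ∈ Ω := hKΩ hqK
    have hΩ'open : IsOpen (Ω ∩ w ⁻¹' (Ioi (M / 2))) :=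
      hw_reg.continuousOn.isOpen_inter_preimage hopen isOpen_Ioi
    have hqΩ' : q ∈ Ω ∩ w ⁻¹' (Ioi (M / 2)) := ⟨hqΩ, hq⟩
    have hΩ'K : Ω ∩ w ⁻¹' (Ioi (M / 2)) ⊆ K := fun x hx =>
      ⟨subset_closure hx.1, le_of_lt (show M / 2 < w x from hx.2)⟩
    -- helper: derivative of the exponential term
    have hexp' : ∀ (k : ℝ) (t : ℝ),
        HasDerivAt (fun s => k * Real.exp (α * s)) (k * α * Real.exp (α * t)) t := by
      intro k t
      have h1 : HasDerivAt (fun s : ℝ => α * s) α t := by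
        simpa using (hasDerivAt_id t).const_mul α
      have h2 := (h1.exp).const_mul k
      rw [show k * α * Real.exp (α * t) = k * (Real.exp (α * t) * α) by ring]
      exact h2
    ---- X direction
    set wX : ℝ → ℝ := fun t => w (t, q.2) with hwXdef
    set U : Set ℝ := {t : ℝ | (t, q.2) ∈ Ω} with hUdef
    have hU : IsOpen U := hopen.preimage (by fun_prop)
    have hq1U : q.1 ∈ U := hqΩ
    have hwXcd : ContDiffOn ℝ 2 wX U := by
      have hL : ContDiff ℝ 2 (fun t : ℝ => (t, q.2)) := contDiff_id.prodMk contDiff_const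
      exact hw_reg.comp hL.contDiffOn (fun t ht => ht)
    have hwXd : DifferentiableOn ℝ wX U := hwXcd.differentiableOn (by norm_num)
    have hwX'cd : ContDiffOn ℝ 1 (deriv wX) U := hwXcd.deriv_of_isOpen hU (by norm_num)
    have hwX'd : DifferentiableOn ℝ (deriv wX) U := hwX'cd.differentiableOn (by norm_num)
    set fX : ℝ → ℝ := fun t => wX t + ε * Real.exp (α * t) with hfXdef
    have hfXdiff : ∀ t ∈ U, DifferentiableAt ℝ fX t := fun t ht =>
      (hwXd.differentiableAt (hU.mem_nhds ht)).add (hexp' ε t).differentiableAt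
    have hderiv_fX : ∀ t ∈ U, deriv fX t = deriv wX t + ε * α * Real.exp (α * t) := by
      intro t ht
      rw [hfXdef]
      rw [deriv_fun_add (hwXd.differentiableAt (hU.mem_nhds ht)) (hexp' ε t).differentiableAt,
        (hexp' ε t).deriv]
    have hfX'eq : deriv fX =ᶠ[nhds q.1] fun t => deriv wX t + ε * α * Real.exp (α * t) := by
      filter_upwards [hU.mem_nhds hq1U] with t ht using hderiv_fX t ht
    have hlocX : IsLocalMax fX q.1 := by
      have htend : ContinuousAt (fun t : ℝ => (t, q.2)) q.1 := by fun_prop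
      have hnhd : ∀ᶠ t in nhds q.1, (t, q.2) ∈ Ω ∩ w ⁻¹' (Ioi (M / 2)) :=
        htend.eventually_mem (hΩ'open.mem_nhds hqΩ')
      show ∀ᶠ t in nhds q.1, fX t ≤ fX q.1
      filter_upwards [hnhd] with t ht
      exact hqmax (hΩ'K ht)
    have hfX'0 : deriv fX q.1 = 0 := hlocX.deriv_eq_zero
    have hfX'dAt : DifferentiableAt ℝ (deriv fX) q.1 := by
      have hd : DifferentiableAt ℝ (fun t => deriv wX t + ε * α * Real.exp (α * t)) q.1 :=
        (hwX'd.differentiableAt (hU.mem_nhds hq1U)).add (hexp' (ε * α) q.1).differentiableAt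
      exact hd.congr_of_eventuallyEq hfX'eq
    have hfX'' : deriv (deriv fX) q.1 ≤ 0 := by
      apply second_deriv_nonpos_of_isLocalMax hlocX _ hfX'dAt
      filter_upwards [hU.mem_nhds hq1U] with t ht using hfXdiff t ht
    have hderiv2 : deriv (deriv fX) q.1
        = deriv (deriv wX) q.1 + ε * α * α * Real.exp (α * q.1) := by
      rw [hfX'eq.deriv_eq]
      rw [deriv_fun_add (hwX'd.differentiableAt (hU.mem_nhds hq1U))
        (hexp' (ε * α) q.1).differentiableAt, (hexp' (ε * α) q.1).deriv]
    have hpdX : pdX w q = deriv wX q.1 := rfl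
    have hpdXX : pdX (pdX w) q = deriv (deriv wX) q.1 := rfl
    -- derived facts about X partials
    have hX1 : deriv wX q.1 = -(ε * α * Real.exp (α * q.1)) := by
      have := hderiv_fX q.1 hq1U
      rw [hfX'0] at this
      linarith
    have hX2 : deriv (deriv wX) q.1 ≤ -(ε * α * α * Real.exp (α * q.1)) := by
      rw [hderiv2] at hfX''
      linarith
    ---- Y direction
    set wY : ℝ → ℝ := fun t => w (q.1, t) with hwYdef
    set V : Set ℝ := {t : ℝ | (q.1, t) ∈ Ω} with hVdef
    have hV : IsOpen V := hopen.preimage (by fun_prop)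
    have hq2V : q.2 ∈ V := hqΩ
    have hwYcd : ContDiffOn ℝ 2 wY V := by
      have hL : ContDiff ℝ 2 (fun t : ℝ => ((q.1 : ℝ), t)) := contDiff_const.prodMk contDiff_id
      exact hw_reg.comp hL.contDiffOn (fun t ht => ht)
    have hwYd : DifferentiableOn ℝ wY V := hwYcd.differentiableOn (by norm_num)
    have hwY'cd : ContDiffOn ℝ 1 (deriv wY) V := hwYcd.deriv_of_isOpen hV (by norm_num)
    have hwY'd : DifferentiableOn ℝ (deriv wY) V := hwY'cd.differentiableOn (by norm_num)
    have hlocY : IsLocalMax wY q.2 := by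
      have htend : ContinuousAt (fun t : ℝ => ((q.1 : ℝ), t)) q.2 := by fun_prop
      have hnhd : ∀ᶠ t in nhds q.2, ((q.1 : ℝ), t) ∈ Ω ∩ w ⁻¹' (Ioi (M / 2)) :=
        htend.eventually_mem (hΩ'open.mem_nhds hqΩ')
      show ∀ᶠ t in nhds q.2, wY t ≤ wY q.2
      filter_upwards [hnhd] with t ht
      have h1 : v (q.1, t) ≤ v q := hqmax (hΩ'K ht)
      have h2 : v (q.1, t) = wY t + ε * Real.exp (α * q.1) := rfl
      have h3 : v q = wY q.2 + ε * Real.exp (α * q.1) := rfl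
      rw [h2, h3] at h1
      linarith
    have hY1 : deriv wY q.2 = 0 := hlocY.deriv_eq_zero
    have hY2 : deriv (deriv wY) q.2 ≤ 0 := by
      apply second_deriv_nonpos_of_isLocalMax hlocY _
        (hwY'd.differentiableAt (hV.mem_nhds hq2V))
      filter_upwards [hV.mem_nhds hq2V] with t ht using hwYd.differentiableAt (hV.mem_nhds ht)
    have hpdY : pdY w q = deriv wY q.2 := rfl
    have hpdYY : pdY (pdY w) q = deriv (deriv wY) q.2 := rfl
    ---- combine with the equation
    have hEq := heq q hqΩ
    rw [lap, hpdXX, hpdYY, hpdX, hpdY, hX1, hY1] at hEq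
    have hAα : C < a q * α := hαkey q hqK
    have hA : 0 < a q := ha_pos q hqΩ
    have hc1 : |(c q).1| ≤ C := hy₀max hqK
    have hc1a : (c q).1 ≤ C := le_trans (le_abs_self _) hc1
    have hc1b : -C ≤ (c q).1 := neg_le_of_neg_le (le_trans (neg_le_abs _) hc1)
    have hexp_pos : 0 < Real.exp (α * q.1) := Real.exp_pos _
    nlinarith [mul_le_mul_of_nonneg_left hX2 hA.le, hY2,
      mul_pos (mul_pos hε hα) hexp_pos, mul_pos hA hα,
      mul_pos (mul_pos (mul_pos hε hα) hexp_pos) (sub_pos.2 hAα)]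
  · -- boundary-of-K case: value comparison contradiction
    push_neg at hq
    have h1 : v p₀ ≤ v q := hqmax hp₀K
    have h2 : Real.exp (α * q.1) ≤ E := he₀max hqK
    have h3 : v p₀ = M + ε * Real.exp (α * p₀.1) := rfl
    have h4 : v q = w q + ε * Real.exp (α * q.1) := rfl
    have hexp_pos : 0 < Real.exp (α * p₀.1) := Real.exp_pos _
    have hεE : ε * E = M / 4 := by
      rw [hεdef]
      field_simp
    have h5 : v q ≤ M / 2 + M / 4 := by
      rw [h4, ← hεE]
      have := mul_le_mul_of_nonneg_left h2 hε.le
      linarith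
    rw [h3] at h1
    nlinarith

/-- Maximum principle for `a·Δw + ⟨c, ∇w⟩ = 0` with no zeroth-order term: a solution
continuous up to the boundary of a nonempty bounded open connected `Ω ⊆ ℝ²` which
vanishes on the boundary vanishes identically on the closure of `Ω`. -/
theorem stmt10 (Ω : Set (ℝ × ℝ)) (hopen : IsOpen Ω) (hconn : IsConnected Ω)
    (hbd : Bornology.IsBounded Ω)
    (a : ℝ × ℝ → ℝ) (ha_cont : ContinuousOn a Ω) (ha_pos : ∀ p ∈ Ω, 0 < a p)
    (c : ℝ × ℝ → ℝ × ℝ) (hc_cont : ContinuousOn c Ω)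
    (w : ℝ × ℝ → ℝ)
    (hw_cont : ContinuousOn w (closure Ω))
    (hw_reg : ContDiffOn ℝ 2 w Ω)
    (hw_bdry : ∀ p ∈ frontier Ω, w p = 0)
    (heq : ∀ p ∈ Ω, a p * lap w p + ((c p).1 * pdX w p + (c p).2 * pdY w p) = 0) :
    ∀ p ∈ closure Ω, w p = 0 := by
  have hne : Ω.Nonempty := hconn.nonempty
  have hle := max_principle_half Ω hopen hne hbd a ha_cont ha_pos c hc_cont w
    hw_cont hw_reg hw_bdry heq
  -- apply to -w
  have hpdXneg : ∀ p, pdX (fun x => -w x) p = -pdX w p := by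
    intro p
    unfold pdX
    exact deriv.neg
  have hpdYneg : ∀ p, pdY (fun x => -w x) p = -pdY w p := by
    intro p
    unfold pdY
    exact deriv.neg
  have hpdXfun : pdX (fun x => -w x) = fun p => -pdX w p := funext hpdXneg
  have hpdYfun : pdY (fun x => -w x) = fun p => -pdY w p := funext hpdYneg
  have hlapneg : ∀ p, lap (fun x => -w x) p = -lap w p := by
    intro p
    unfold lap
    rw [hpdXfun, hpdYfun]
    have h1 : pdX (fun p => -pdX w p) p = -pdX (pdX w) p := by
      unfold pdX; exact deriv.neg
    have h2 : pdY (fun p => -pdY w p) p = -pdY (pdY w) p := by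
      unfold pdY; exact deriv.neg
    rw [h1, h2]
    ring
  have hge := max_principle_half Ω hopen hne hbd a ha_cont ha_pos c hc_cont
    (fun x => -w x)
    (hw_cont.neg) (hw_reg.neg)
    (fun p hp => by show -w p = 0; rw [hw_bdry p hp]; ring)
    (by
      intro p hp
      rw [hlapneg, hpdXneg, hpdYneg]
      have := heq p hp
      linarith)
  intro p hp
  have h1 := hle p hp
  have h2 := hge p hp
  simp only [neg_nonpos] at h2
  linarith
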